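/- Let a ≥ 0, α := 1/2 - √(1/4 + a) (so α ≤ 0), and let n ≥ 0 be an integer. Define the polynomial P_n(s) := Σ_{i=0}^n ((-n)_i / ((3/2 - α)_i)) s^i / i!, where (s)_i = s(s+1)⋯(s+i-1) denotes the Pochhammer symbol with (s)_0 = 1. Then there exists γ ∈ ℝ such that the function u : ℝ × (ℝ³ \ {0}) → ℂ given by u(t, x) := (1 + t²)^{-3/4 + α/2} |x|^{-α} e^{-|x|²/(4(1+t²))} e^{i |x|² t/(4(1+t²))} e^{-iγ arctan t} P_n(|x|²/(2(1+t²))) satisfies the Schrödinger equation with inverse-square potential i ∂_t u(t,x) = -Δu(t,x) + (a/|x|²) u(t,x) for all t ∈ ℝ and x ≠ 0, with initial datum u(0, x) = |x|^{-α} e^{-|x|²/4} P_n(|x|²/2). -/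

import Mathlib

open Real MeasureTheory

/-- `α = 1/2 - √(1/4 + a)` (so `α ≤ 0` when `a ≥ 0`). -/
noncomputable def invSqAlpha (a : ℝ) : ℝ := 1 / 2 - Real.sqrt (1 / 4 + a)

/-- The polynomial `P_n(s) = Σ_{i=0}^n ((-n)_i / ((3/2 - α)_i)) s^i / i!`, where
`(s)_i` is the Pochhammer (rising factorial) symbol. -/
noncomputable def invSqPoly (a : ℝ) (n : ℕ) (s : ℝ) : ℝ :=
  ∑ i ∈ Finset.range (n + 1),
    ((ascPochhammer ℝ i).eval (-(n : ℝ)) / (ascPochhammer ℝ i).eval (3 / 2 - invSqAlpha a))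
      * s ^ i / (Nat.factorial i : ℝ)

/-- The explicit function
`u(t,x) = (1+t²)^{-3/4+α/2} |x|^{-α} e^{-|x|²/(4(1+t²))} e^{i|x|²t/(4(1+t²))}
e^{-iγ arctan t} P_n(|x|²/(2(1+t²)))` on `ℝ × (ℝ³ \ {0})`. -/
noncomputable def invSqSolution (a : ℝ) (n : ℕ) (γ : ℝ) (t : ℝ)
    (x : EuclideanSpace ℝ (Fin 3)) : ℂ :=
  (((1 + t ^ 2) ^ (-(3 : ℝ) / 4 + invSqAlpha a / 2) : ℝ) : ℂ)
    * ((‖x‖ ^ (-(invSqAlpha a)) : ℝ) : ℂ)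
    * ((Real.exp (-‖x‖ ^ 2 / (4 * (1 + t ^ 2))) : ℝ) : ℂ)
    * Complex.exp (Complex.I * ((‖x‖ ^ 2 * t / (4 * (1 + t ^ 2)) : ℝ) : ℂ))
    * Complex.exp (-Complex.I * (γ : ℂ) * ((Real.arctan t : ℝ) : ℂ))
    * ((invSqPoly a n (‖x‖ ^ 2 / (2 * (1 + t ^ 2))) : ℝ) : ℂ)

/-! ### Auxiliary material: the Laguerre-type polynomial and its ODE -/

noncomputable def lagC (b : ℝ) (n k : ℕ) : ℝ :=
  (ascPochhammer ℝ k).eval (-(n:ℝ)) / ((ascPochhammer ℝ k).eval b * (k.factorial : ℝ))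

noncomputable def lagP (b : ℝ) (n : ℕ) : Polynomial ℝ :=
  ∑ i ∈ Finset.range (n+1), Polynomial.C (lagC b n i) * Polynomial.X ^ i

lemma poch_neg_nat_eq_zero {n k : ℕ} (h : n < k) :
    (ascPochhammer ℝ k).eval (-(n:ℝ)) = 0 := by
  induction k with
  | zero => omega
  | succ k ih =>
    rw [ascPochhammer_succ_eval]
    rcases Nat.lt_or_ge n k with h' | h'
    · rw [ih h', zero_mul]
    · have : n = k := by omega
      subst this
      simp

lemma lagC_eq_zero (b : ℝ) {n k : ℕ} (h : n < k) : lagC b n k = 0 := by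
  simp [lagC, poch_neg_nat_eq_zero h]

lemma lagP_coeff (b : ℝ) (n k : ℕ) : (lagP b n).coeff k = lagC b n k := by
  rw [lagP, Polynomial.finset_sum_coeff]
  simp only [Polynomial.coeff_C_mul, Polynomial.coeff_X_pow]
  rcases Nat.lt_or_ge n k with h | h
  · rw [Finset.sum_eq_zero, lagC_eq_zero b h]
    intro i hi
    simp only [Finset.mem_range] at hi
    rw [if_neg (by omega), mul_zero]
  · rw [Finset.sum_eq_single k]
    · simp
    · intro i _ hik
      rw [if_neg (fun hh => hik hh.symm), mul_zero]
    · intro hk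
      simp only [Finset.mem_range] at hk
      omega

lemma lagC_rec (b : ℝ) (hb : 0 < b) (n k : ℕ) :
    ((k:ℝ)+1) * (b + k) * lagC b n (k+1) = ((k:ℝ) - n) * lagC b n k := by
  have hpb : 0 < (ascPochhammer ℝ k).eval b := ascPochhammer_pos k b hb
  have hbk : (0:ℝ) < b + k := by positivity
  have hf : ((k.factorial : ℝ)) ≠ 0 := Nat.cast_ne_zero.mpr k.factorial_ne_zero
  rw [lagC, lagC, ascPochhammer_succ_eval, ascPochhammer_succ_eval, Nat.factorial_succ]
  push_cast
  field_simp
  ring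

lemma lagP_ode (b : ℝ) (hb : 0 < b) (n : ℕ) (s : ℝ) :
    s * ((lagP b n).derivative.derivative.eval s)
      + (b - s) * ((lagP b n).derivative.eval s) + n * (lagP b n).eval s = 0 := by
  have hQ : Polynomial.X * (lagP b n).derivative.derivative
      + (Polynomial.C b - Polynomial.X) * (lagP b n).derivative
      + Polynomial.C (n:ℝ) * (lagP b n) = 0 := by
    ext k
    simp only [Polynomial.coeff_add, sub_mul, Polynomial.coeff_sub,
      Polynomial.coeff_C_mul, Polynomial.coeff_zero]
    match k with
    | 0 =>
      simp only [Polynomial.coeff_X_mul_zero, Polynomial.coeff_derivative, lagP_coeff]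
      have h := lagC_rec b hb n 0
      push_cast at h ⊢
      linear_combination h
    | (k+1) =>
      simp only [Polynomial.coeff_X_mul, Polynomial.coeff_derivative, lagP_coeff]
      have h := lagC_rec b hb n (k+1)
      push_cast at h ⊢
      linear_combination h
  have h := congrArg (Polynomial.eval s) hQ
  simp only [Polynomial.eval_add, Polynomial.eval_mul, Polynomial.eval_X, Polynomial.eval_sub,
    Polynomial.eval_C, Polynomial.eval_zero] at h
  linarith [h]

lemma invSqPoly_eval (a : ℝ) (n : ℕ) (s : ℝ) :
    invSqPoly a n s = (lagP (3/2 - invSqAlpha a) n).eval s := by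
  rw [invSqPoly, lagP, Polynomial.eval_finset_sum]
  refine Finset.sum_congr rfl fun i _ => ?_
  rw [Polynomial.eval_mul, Polynomial.eval_C, Polynomial.eval_pow, Polynomial.eval_X, lagC]
  ring

/-! ### The radial profile and its derivatives -/

noncomputable def gFun (α γ : ℝ) (n : ℕ) (t q : ℝ) : ℂ :=
  (((1 + t ^ 2) ^ (-(3 : ℝ) / 4 + α / 2) : ℝ) : ℂ)
    * ((q ^ (-α/2) : ℝ) : ℂ)
    * ((Real.exp (-q / (4 * (1 + t ^ 2))) : ℝ) : ℂ)
    * Complex.exp (Complex.I * ((q * t / (4 * (1 + t ^ 2)) : ℝ) : ℂ))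
    * Complex.exp (-Complex.I * (γ : ℂ) * ((Real.arctan t : ℝ) : ℂ))
    * (((lagP (3/2 - α) n).eval (q / (2 * (1 + t ^ 2))) : ℝ) : ℂ)

noncomputable def UC (t : ℝ) : ℂ := (1 + (t:ℂ)^2)⁻¹

noncomputable def WF (t : ℝ) : ℂ := (Complex.I * t - 1) * UC t / 4

noncomputable def LFt (α γ : ℝ) (t q : ℝ) : ℂ :=
  (((-(3:ℝ)/4 + α/2) * Real.log (1+t^2) : ℝ):ℂ) + (((-α/2) * Real.log q : ℝ):ℂ)
    + WF t * q + (-Complex.I * (γ:ℂ) * ((Real.arctan t : ℝ):ℂ))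

noncomputable def PC0 (α : ℝ) (n : ℕ) (t q : ℝ) : ℂ :=
  (((lagP (3/2 - α) n).eval (q / (2 * (1 + t ^ 2))) : ℝ) : ℂ)
noncomputable def PC1 (α : ℝ) (n : ℕ) (t q : ℝ) : ℂ :=
  (((lagP (3/2 - α) n).derivative.eval (q / (2 * (1 + t ^ 2))) : ℝ) : ℂ)
noncomputable def PC2 (α : ℝ) (n : ℕ) (t q : ℝ) : ℂ :=
  (((lagP (3/2 - α) n).derivative.derivative.eval (q / (2 * (1 + t ^ 2))) : ℝ) : ℂ)

lemma sigma_pos (t : ℝ) : (0:ℝ) < 1 + t^2 := by positivity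
lemma sigma_ne_c (t : ℝ) : (1 + (t:ℂ)^2) ≠ 0 := by
  have : ((1 + t^2 : ℝ) : ℂ) ≠ 0 := Complex.ofReal_ne_zero.mpr (ne_of_gt (sigma_pos t))
  push_cast at this
  exact this

lemma gFun_eq_exp (α γ : ℝ) (n : ℕ) (t : ℝ) {q : ℝ} (hq : 0 < q) :
    gFun α γ n t q = Complex.exp (LFt α γ t q) * PC0 α n t q := by
  rw [gFun, LFt, PC0, Complex.exp_add, Complex.exp_add, Complex.exp_add]
  have h1 : Complex.exp ((((-(3:ℝ)/4 + α/2) * Real.log (1+t^2) : ℝ):ℂ))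
      = (((1 + t ^ 2) ^ (-(3 : ℝ) / 4 + α / 2) : ℝ) : ℂ) := by
    rw [← Complex.ofReal_exp, Real.rpow_def_of_pos (sigma_pos t), mul_comm]
  have h2 : Complex.exp ((((-α/2) * Real.log q : ℝ):ℂ)) = ((q ^ (-α/2) : ℝ) : ℂ) := by
    rw [← Complex.ofReal_exp, Real.rpow_def_of_pos hq, mul_comm]
  have h3 : Complex.exp (WF t * q)
      = ((Real.exp (-q / (4 * (1 + t ^ 2))) : ℝ) : ℂ)
        * Complex.exp (Complex.I * ((q * t / (4 * (1 + t ^ 2)) : ℝ) : ℂ)) := by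
    rw [Complex.ofReal_exp, ← Complex.exp_add]
    congr 1
    rw [WF, UC]
    push_cast
    simp only [div_eq_mul_inv, mul_inv]
    ring
  rw [h1, h2, h3]
  ring

noncomputable def MC (t : ℝ) : ℂ := UC t / 2
noncomputable def BetaC (α : ℝ) : ℂ := -(α:ℂ)/2
noncomputable def AF (α : ℝ) (n : ℕ) (t q : ℝ) : ℂ :=
  (WF t + BetaC α * ((q:ℂ))⁻¹) * PC0 α n t q + MC t * PC1 α n t q
noncomputable def g1F (α γ : ℝ) (n : ℕ) (t q : ℝ) : ℂ :=
  Complex.exp (LFt α γ t q) * AF α n t q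
noncomputable def APF (α : ℝ) (n : ℕ) (t q : ℝ) : ℂ :=
  (-(BetaC α) * (((q:ℂ))⁻¹)^2) * PC0 α n t q
    + (WF t + BetaC α * ((q:ℂ))⁻¹) * (MC t * PC1 α n t q)
    + MC t * (MC t * PC2 α n t q)
noncomputable def g2F (α γ : ℝ) (n : ℕ) (t q : ℝ) : ℂ :=
  Complex.exp (LFt α γ t q) * ((WF t + BetaC α * ((q:ℂ))⁻¹) * AF α n t q + APF α n t q)

lemma hasDerivAt_PC0_q (α : ℝ) (n : ℕ) (t q : ℝ) :
    HasDerivAt (fun q => PC0 α n t q) (MC t * PC1 α n t q) q := by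
  have hin := (hasDerivAt_id q).div_const (2 * (1 + t^2))
  have h := (((lagP (3/2 - α) n).hasDerivAt (q / (2 * (1 + t^2)))).comp q hin).ofReal_comp
  simp only [PC0]
  convert h using 1
  · rfl
  rw [MC, PC1, UC]
  push_cast
  simp only [div_eq_mul_inv, mul_inv, one_mul]
  ring

lemma hasDerivAt_PC1_q (α : ℝ) (n : ℕ) (t q : ℝ) :
    HasDerivAt (fun q => PC1 α n t q) (MC t * PC2 α n t q) q := by
  have hin := (hasDerivAt_id q).div_const (2 * (1 + t^2))
  have h := (((lagP (3/2 - α) n).derivative.hasDerivAt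
    (q / (2 * (1 + t^2)))).comp q hin).ofReal_comp
  simp only [PC1]
  convert h using 1
  · rfl
  rw [MC, PC2, UC]
  push_cast
  simp only [div_eq_mul_inv, mul_inv, one_mul]
  ring

lemma hasDerivAt_LFt_q (α γ : ℝ) (t : ℝ) {q : ℝ} (hq : 0 < q) :
    HasDerivAt (fun q => LFt α γ t q) (WF t + BetaC α * ((q:ℂ))⁻¹) q := by
  have h2 : HasDerivAt (fun q : ℝ => (((-α/2) * Real.log q : ℝ):ℂ)) ((((-α/2) * q⁻¹ : ℝ)):ℂ) q :=
    ((Real.hasDerivAt_log (ne_of_gt hq)).const_mul (-α/2)).ofReal_comp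
  have h3 : HasDerivAt (fun q : ℝ => WF t * (q:ℂ)) (WF t) q := by
    simpa using ((hasDerivAt_id q).ofReal_comp).const_mul (WF t)
  have h := (((hasDerivAt_const q ((((-(3:ℝ)/4 + α/2) * Real.log (1+t^2) : ℝ):ℂ))).add h2).add
    h3).add (hasDerivAt_const q (-Complex.I * (γ:ℂ) * ((Real.arctan t : ℝ):ℂ)))
  simp only [LFt]
  convert h using 1
  · rfl
  · rfl
  rw [BetaC]
  push_cast
  ring

lemma hasDerivAt_g_q (α γ : ℝ) (n : ℕ) (t : ℝ) {q : ℝ} (hq : 0 < q) :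
    HasDerivAt (fun q => Complex.exp (LFt α γ t q) * PC0 α n t q) (g1F α γ n t q) q := by
  have h := ((hasDerivAt_LFt_q α γ t hq).cexp).mul (hasDerivAt_PC0_q α n t q)
  convert h using 1
  · rfl
  · rfl
  rw [g1F, AF]
  ring

lemma hasDerivAt_g1_q (α γ : ℝ) (n : ℕ) (t : ℝ) {q : ℝ} (hq : 0 < q) :
    HasDerivAt (fun q => g1F α γ n t q) (g2F α γ n t q) q := by
  have hqc : (q:ℂ) ≠ 0 := Complex.ofReal_ne_zero.mpr (ne_of_gt hq)
  have hB : HasDerivAt (fun q : ℝ => WF t + BetaC α * ((q:ℂ))⁻¹)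
      (-(BetaC α) * (((q:ℂ))⁻¹)^2) q := by
    have h0 : HasDerivAt (fun q : ℝ => ((q:ℂ))⁻¹) (-1/(q:ℂ)^2) q := by
      have := (hasDerivAt_inv hqc).comp_ofReal
      convert this using 1
      field_simp
    have h2 := (h0.const_mul (BetaC α)).const_add (WF t)
    convert h2 using 1
    · rfl
    field_simp
  have hA : HasDerivAt (fun q => AF α n t q) (APF α n t q) q := by
    have h1 := hB.mul (hasDerivAt_PC0_q α n t q)
    have h2 := (hasDerivAt_PC1_q α n t q).const_mul (MC t)
    have h3 := h1.add h2
    simp only [AF]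
    convert h3 using 1
    all_goals rfl
  have h := ((hasDerivAt_LFt_q α γ t hq).cexp).mul hA
  simp only [g1F]
  convert h using 1
  · rfl
  · rfl
  rw [g2F]
  ring

noncomputable def WdF (t : ℝ) : ℂ :=
  (Complex.I*(1 - (t:ℂ)^2) + 2*t) * (UC t)^2 / 4
noncomputable def KdF (α γ : ℝ) (t q : ℝ) : ℂ :=
  ((α:ℂ)/2 - 3/4) * (2*(t:ℂ)) * UC t + WdF t * q - Complex.I * (γ:ℂ) * UC t
noncomputable def gtF (α γ : ℝ) (n : ℕ) (t q : ℝ) : ℂ :=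
  Complex.exp (LFt α γ t q)
    * (KdF α γ t q * PC0 α n t q + (-(q:ℂ)*t*(UC t)^2) * PC1 α n t q)

lemma hasDerivAt_sigma (t : ℝ) : HasDerivAt (fun t : ℝ => 1 + t^2) (2*t) t := by
  simpa using ((hasDerivAt_pow 2 t).const_add 1)

lemma hasDerivAt_g_t (α γ : ℝ) (n : ℕ) (t q : ℝ) :
    HasDerivAt (fun t => Complex.exp (LFt α γ t q) * PC0 α n t q) (gtF α γ n t q) t := by
  have hσ := hasDerivAt_sigma t
  have hσne : (1 + t^2) ≠ 0 := ne_of_gt (sigma_pos t)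
  have hσcne : (1 + (t:ℂ)^2) ≠ 0 := sigma_ne_c t
  have h4σne : (4*(1 + (t:ℂ)^2)) ≠ 0 := mul_ne_zero (by norm_num) hσcne
  have hT1 : HasDerivAt (fun t : ℝ => (((-(3:ℝ)/4 + α/2) * Real.log (1+t^2) : ℝ):ℂ))
      ((((-(3:ℝ)/4 + α/2) * ((1+t^2)⁻¹ * (2*t)) : ℝ)):ℂ) t :=
    ((((Real.hasDerivAt_log hσne).comp t hσ)).const_mul _).ofReal_comp
  have hu : HasDerivAt (fun t : ℝ => Complex.I * (t:ℂ) - 1) Complex.I t := by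
    have h1 := (((hasDerivAt_id t).ofReal_comp).const_mul Complex.I).sub_const (1:ℂ)
    convert h1 using 1
    · rfl
    · rfl
    push_cast
    ring
  have hvin : HasDerivAt (fun t : ℝ => ((t:ℂ))^2) (2*(t:ℂ)) t := by
    have h1 := (hasDerivAt_pow 2 t).ofReal_comp
    have hfun : (fun t : ℝ => ((t:ℂ))^2) = (fun t : ℝ => (((t^2 : ℝ)):ℂ)) := by
      funext y
      push_cast
      ring
    rw [hfun]
    convert h1 using 1
    push_cast
    ring
  have hv : HasDerivAt (fun t : ℝ => 4*(1+((t:ℂ))^2)) (4*(2*(t:ℂ))) t :=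
    (hvin.const_add 1).const_mul 4
  have hW : HasDerivAt (fun t : ℝ => WF t) (WdF t) t := by
    have hWdiv : (fun t : ℝ => WF t)
        = (fun t : ℝ => (Complex.I * (t:ℂ) - 1) / (4*(1+((t:ℂ))^2))) := by
      funext y
      rw [WF, UC]
      simp only [div_eq_mul_inv, mul_inv]
      ring
    rw [hWdiv]
    have := hu.div hv h4σne
    convert this using 1
    · rfl
    · rfl
    rw [WdF, UC]
    field_simp
    ring
  have hT3 : HasDerivAt (fun t : ℝ => WF t * (q:ℂ)) (WdF t * (q:ℂ)) t := hW.mul_const _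
  have hT4 : HasDerivAt (fun t : ℝ => -Complex.I * (γ:ℂ) * ((Real.arctan t : ℝ):ℂ))
      (-Complex.I * (γ:ℂ) * (((1/(1+t^2) : ℝ)):ℂ)) t :=
    ((Real.hasDerivAt_arctan t).ofReal_comp).const_mul (-Complex.I * (γ:ℂ))
  have hL : HasDerivAt (fun t => LFt α γ t q) (KdF α γ t q) t := by
    have h := ((hT1.add (hasDerivAt_const t (((-α/2) * Real.log q : ℝ):ℂ))).add hT3).add hT4
    simp only [LFt]
    convert h using 1
    · rfl
    · rfl
    rw [KdF, UC]
    push_cast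
    field_simp
    ring
  have hPC0t : HasDerivAt (fun t => PC0 α n t q)
      ((-(q:ℂ)*t*(UC t)^2) * PC1 α n t q) t := by
    have hden : HasDerivAt (fun t : ℝ => 2*(1+t^2)) (2*(2*t)) t := hσ.const_mul 2
    have hinner : HasDerivAt (fun t : ℝ => q / (2*(1+t^2)))
        ((0 * (2*(1+t^2)) - q * (2*(2*t))) / (2*(1+t^2))^2) t :=
      (hasDerivAt_const t q).div hden (by positivity)
    have h := (((lagP (3/2 - α) n).hasDerivAt (q / (2*(1+t^2)))).comp t hinner).ofReal_comp
    simp only [PC0]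
    convert h using 1
    · rfl
    rw [PC1, UC]
    push_cast
    field_simp
    ring
  have h := (hL.cexp).mul hPC0t
  convert h using 1
  · rfl
  · rfl
  rw [gtF]
  ring

/-! ### The algebraic core -/

lemma bracket_identity (αc nc tc qc u v P0 P1 P2 : ℂ)
    (hv : qc * v = 1)
    (hODE : (qc*u/2) * P2 + ((3/2 - αc) - qc*u/2) * P1 + nc * P0 = 0) :
    Complex.I * ((((αc/2 - 3/4) * (2*tc) * u)
          + ((Complex.I*(1 - tc^2) + 2*tc) * u^2/4) * qc
          - Complex.I * (2*nc + 3/2 - αc) * u) * P0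
        + (-qc*tc*u^2) * P1)
    = -((4*qc) * (((Complex.I*tc - 1)*u/4 + (-αc/2) * v)
            * (((Complex.I*tc - 1)*u/4 + (-αc/2) * v) * P0 + (u/2) * P1)
          + ((-(-αc/2) * v^2) * P0
            + ((Complex.I*tc - 1)*u/4 + (-αc/2) * v) * ((u/2) * P1)
            + (u/2) * ((u/2) * P2)))
        + 6 * (((Complex.I*tc - 1)*u/4 + (-αc/2) * v) * P0 + (u/2) * P1))
      + (αc^2 - αc) * v * P0 := by
  linear_combination (2*u) * hODE
    + (2*v*αc*P0 + v*αc^2*P0 - 2*u*αc*P1 + u*αc*P0 - Complex.I*tc*u*αc*P0) * hv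
    + (-(3/2 : ℂ)*u*P0 - 2*u*nc*P0 + u*αc*P0 + (1/4 : ℂ)*qc*u^2*P0) * Complex.I_sq

set_option maxHeartbeats 1000000 in
lemma key_identity (α : ℝ) (n : ℕ) (hb : 0 < 3/2 - α) (γ : ℝ) (hγ : γ = 2*n + 3/2 - α)
    (t : ℝ) {q : ℝ} (hq : 0 < q) :
    Complex.I * gtF α γ n t q
      = -((((4*q : ℝ)):ℂ) * g2F α γ n t q + 6 * g1F α γ n t q)
        + ((((α^2 - α)/q : ℝ)):ℂ) * (Complex.exp (LFt α γ t q) * PC0 α n t q) := by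
  have hσcne : (1 + (t:ℂ)^2) ≠ 0 := sigma_ne_c t
  have hqc : (q:ℂ) ≠ 0 := Complex.ofReal_ne_zero.mpr (ne_of_gt hq)
  have hv : (q:ℂ) * ((q:ℂ))⁻¹ = 1 := mul_inv_cancel₀ hqc
  have hODE := lagP_ode (3/2 - α) hb n (q/(2*(1+t^2)))
  have hcoe : ((q/(2*(1+t^2)) : ℝ) : ℂ) = (q:ℂ) * UC t / 2 := by
    rw [UC]
    push_cast
    simp only [div_eq_mul_inv, mul_inv]
    ring
  have hODEc : ((q:ℂ) * UC t/2) * PC2 α n t q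
      + ((3/2 - (α:ℂ)) - (q:ℂ) * UC t/2) * PC1 α n t q
      + (n:ℂ) * PC0 α n t q = 0 := by
    rw [PC2, PC1, PC0, ← hcoe]
    have h := congrArg (fun r : ℝ => (r : ℂ)) hODE
    push_cast at h ⊢
    convert h using 2 <;> ring
  have hbr := bracket_identity (α:ℂ) (n:ℂ) (t:ℂ) (q:ℂ) (UC t) ((q:ℂ))⁻¹
    (PC0 α n t q) (PC1 α n t q) (PC2 α n t q) hv hODEc
  simp only [gtF, g2F, g1F, APF, AF, KdF, WdF, WF, MC, BetaC]
  rw [hγ]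
  push_cast
  linear_combination (Complex.exp (LFt α (2*n + 3/2 - α) t q)) * hbr

local notation "E3" => EuclideanSpace ℝ (Fin 3)

lemma radial_laplacian (g g1 g2 : ℝ → ℂ)
    (h1 : ∀ q : ℝ, 0 < q → HasDerivAt g (g1 q) q)
    (h2 : ∀ q : ℝ, 0 < q → HasDerivAt g1 (g2 q) q)
    (x : E3) (hx : x ≠ 0) :
    ∑ k : Fin 3, fderiv ℝ (fun y => fderiv ℝ (fun z => g (‖z‖^2)) y (EuclideanSpace.single k 1)) x
        (EuclideanSpace.single k 1)
      = ((4 * ‖x‖^2 : ℝ) : ℂ) * g2 (‖x‖^2) + 6 * g1 (‖x‖^2) := by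
  have hq : ∀ y : E3, y ≠ 0 → (0:ℝ) < ‖y‖^2 := fun y hy =>
    pow_pos (norm_pos_iff.mpr hy) 2
  have key : ∀ (y : E3), y ≠ 0 → ∀ k : Fin 3,
      fderiv ℝ (fun z : E3 => g (‖z‖^2)) y (EuclideanSpace.single k 1)
        = ((2 * y k : ℝ) : ℂ) * g1 (‖y‖^2) := by
    intro y hy k
    have h3 := (((h1 _ (hq y hy)).hasFDerivAt).comp y
      (hasStrictFDerivAt_norm_sq y).hasFDerivAt).fderiv
    rw [show (fun z : E3 => g (‖z‖^2)) = (g ∘ fun z : E3 => ‖z‖^2) from rfl, h3]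
    simp [EuclideanSpace.inner_single_right]
    ring
  have hsum : ∑ k : Fin 3, (x k)^2 = ‖x‖^2 := by
    rw [EuclideanSpace.norm_eq, Real.sq_sqrt (by positivity)]
    simp
  have main : ∀ k : Fin 3,
      fderiv ℝ (fun y => fderiv ℝ (fun z : E3 => g (‖z‖^2)) y (EuclideanSpace.single k 1)) x
        (EuclideanSpace.single k 1)
      = ((4 * (x k)^2 : ℝ) : ℂ) * g2 (‖x‖^2) + 2 * g1 (‖x‖^2) := by
    intro k
    have hev : (fun y => fderiv ℝ (fun z : E3 => g (‖z‖^2)) y (EuclideanSpace.single k 1))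
        =ᶠ[nhds x] (fun y : E3 => ((2 * y k : ℝ) : ℂ) * g1 (‖y‖^2)) := by
      filter_upwards [IsOpen.mem_nhds isOpen_compl_singleton hx] with y hy
      exact key y hy k
    rw [hev.fderiv_eq]
    have hc : HasFDerivAt (fun y : E3 => ((2 * y k : ℝ) : ℂ))
        ((Complex.ofRealCLM.comp ((2:ℝ) • (EuclideanSpace.proj k : E3 →L[ℝ] ℝ)))) x :=
      Complex.ofRealCLM.hasFDerivAt.comp x
        (((EuclideanSpace.proj k : E3 →L[ℝ] ℝ).hasFDerivAt).const_smul (2:ℝ))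
    have hf : HasFDerivAt (fun y : E3 => g1 (‖y‖^2))
        (((1 : ℝ →L[ℝ] ℝ).smulRight (g2 (‖x‖^2))).comp (2 • (innerSL ℝ x))) x :=
      ((h2 _ (hq x hx)).hasFDerivAt).comp x (hasStrictFDerivAt_norm_sq x).hasFDerivAt
    have := (hc.mul' hf).fderiv
    rw [show (fun y : E3 => ((2 * y k : ℝ) : ℂ) * g1 (‖y‖^2)) = (fun y : E3 => ((2 * y k : ℝ) : ℂ)) * (fun y => g1 (‖y‖^2)) from rfl, this]
    simp [EuclideanSpace.inner_single_right, ContinuousLinearMap.smul_apply]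
    ring
  rw [Finset.sum_congr rfl (fun k _ => main k), Finset.sum_add_distrib]
  have h4 : ∑ k : Fin 3, ((4 * (x k)^2 : ℝ) : ℂ) * g2 (‖x‖^2)
      = ((4 * ‖x‖^2 : ℝ) : ℂ) * g2 (‖x‖^2) := by
    rw [← Finset.sum_mul, ← hsum]
    push_cast
    rw [Finset.mul_sum]
  rw [h4]
  simp
  ring

/-- **Explicit solutions of the Schrödinger equation with inverse-square potential**
(formula (28) of the paper). Let `a ≥ 0`, `α = 1/2 - √(1/4+a)`, `n ∈ ℕ`. Then there is
`γ ∈ ℝ` such that `u = invSqSolution a n γ` satisfies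
`i ∂_t u(t,x) = -Δu(t,x) + (a/|x|²) u(t,x)` for all `t ∈ ℝ`, `x ≠ 0`, with initial
datum `u(0,x) = |x|^{-α} e^{-|x|²/4} P_n(|x|²/2)`. -/
theorem invSq_explicit_evolution (a : ℝ) (ha : 0 ≤ a) (n : ℕ) :
    ∃ γ : ℝ, ∀ (t : ℝ) (x : EuclideanSpace ℝ (Fin 3)), x ≠ 0 →
      (Complex.I * deriv (fun s => invSqSolution a n γ s x) t
        = -(∑ k : Fin 3,
              fderiv ℝ (fun y =>
                  fderiv ℝ (fun z => invSqSolution a n γ t z) y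
                    (EuclideanSpace.single k 1))
                x (EuclideanSpace.single k 1))
          + ((a / ‖x‖ ^ 2 : ℝ) : ℂ) * invSqSolution a n γ t x)
      ∧ invSqSolution a n γ 0 x
          = ((‖x‖ ^ (-(invSqAlpha a)) * Real.exp (-‖x‖ ^ 2 / 4)
              * invSqPoly a n (‖x‖ ^ 2 / 2) : ℝ) : ℂ) := by
  set α := invSqAlpha a with hαdef
  have hs4 : (0:ℝ) ≤ 1/4 + a := by linarith
  have hsq : Real.sqrt (1/4 + a) = 1/2 - α := by
    rw [hαdef, invSqAlpha]; ring
  have hsqnn : (0:ℝ) ≤ 1/2 - α := hsq ▸ Real.sqrt_nonneg _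
  have hsqsq : (1/2 - α)^2 = 1/4 + a := by
    rw [← hsq, Real.sq_sqrt hs4]
  have ha2 : a = α^2 - α := by nlinarith [hsqsq]
  have hαle : α ≤ 0 := by
    have h14 : Real.sqrt (1/4) ≤ Real.sqrt (1/4 + a) := Real.sqrt_le_sqrt (by linarith)
    have : Real.sqrt (1/4) = 1/2 := by
      rw [show (1/4 : ℝ) = (1/2)^2 by norm_num, Real.sqrt_sq (by norm_num)]
    rw [this, hsq] at h14
    linarith
  have hb : 0 < 3/2 - α := by linarith
  refine ⟨2*n + 3/2 - α, fun t x hx => ?_⟩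
  set γ : ℝ := 2*n + 3/2 - α with hγdef
  -- the solution is the radial profile evaluated at `‖x‖²`
  have hgsol : ∀ (s : ℝ) (y : E3), invSqSolution a n γ s y = gFun α γ n s (‖y‖^2) := by
    intro s y
    rw [invSqSolution, gFun, invSqPoly_eval]
    have hrw : ((‖y‖ ^ (-(α)) : ℝ) : ℂ) = (((‖y‖^2 : ℝ) ^ (-α/2) : ℝ) : ℂ) := by
      norm_cast
      rw [show ((‖y‖^2 : ℝ)) = ‖y‖ ^ (2:ℝ) by
        rw [← Real.rpow_natCast ‖y‖ 2]; norm_num]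
      rw [← Real.rpow_mul (norm_nonneg y)]
      congr 1
      ring
    rw [hrw]
  have hqpos : (0:ℝ) < ‖x‖^2 := pow_pos (norm_pos_iff.mpr hx) 2
  constructor
  · -- the PDE
    have hfun : (fun s => invSqSolution a n γ s x) = fun s => gFun α γ n s (‖x‖^2) :=
      funext fun s => hgsol s x
    have hfun2 : (fun z : E3 => invSqSolution a n γ t z) = fun z : E3 => gFun α γ n t (‖z‖^2) :=
      funext fun z => hgsol t z
    rw [hfun, hfun2]
    -- time derivative
    have hexpform : (fun s => gFun α γ n s (‖x‖^2))
        = fun s => Complex.exp (LFt α γ s (‖x‖^2)) * PC0 α n s (‖x‖^2) :=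
      funext fun s => gFun_eq_exp α γ n s hqpos
    have htd : deriv (fun s => gFun α γ n s (‖x‖^2)) t = gtF α γ n t (‖x‖^2) := by
      rw [hexpform]
      exact (hasDerivAt_g_t α γ n t (‖x‖^2)).deriv
    rw [htd]
    -- Laplacian
    have h1 : ∀ q : ℝ, 0 < q → HasDerivAt (fun q => gFun α γ n t q) (g1F α γ n t q) q := by
      intro q hq
      apply (hasDerivAt_g_q α γ n t hq).congr_of_eventuallyEq
      filter_upwards [Ioi_mem_nhds hq] with r hr
      exact gFun_eq_exp α γ n t hr
    have h2 : ∀ q : ℝ, 0 < q → HasDerivAt (fun q => g1F α γ n t q) (g2F α γ n t q) q :=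
      fun q hq => hasDerivAt_g1_q α γ n t hq
    rw [radial_laplacian (fun q => gFun α γ n t q) (g1F α γ n t) (g2F α γ n t) h1 h2 x hx]
    -- wrap up with the key algebraic identity
    have hk := key_identity α n hb γ hγdef t hqpos
    rw [hgsol t x, gFun_eq_exp α γ n t hqpos]
    rw [show ((a / ‖x‖^2 : ℝ) : ℂ) = (((α^2 - α) / (‖x‖^2) : ℝ) : ℂ) by rw [ha2]]
    calc Complex.I * gtF α γ n t (‖x‖^2)
        = -((((4*(‖x‖^2) : ℝ)):ℂ) * g2F α γ n t (‖x‖^2) + 6 * g1F α γ n t (‖x‖^2))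
          + ((((α^2 - α)/(‖x‖^2) : ℝ)):ℂ)
            * (Complex.exp (LFt α γ t (‖x‖^2)) * PC0 α n t (‖x‖^2)) := hk
      _ = _ := by push_cast; ring
  · -- the initial datum
    rw [invSqSolution]
    norm_num [Real.arctan_zero]
    exact Or.inl rfl
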